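/- Let A be a unital associative ℂ-algebra and B = ⊕_{n≥0} A^{⊗n} its bar construction. Define ∂̄ : A ⊗ B → B by ∂̄(a₁ ⊗ (a₂,…,a_n)) = ∑_{i=1}^{n} (−1)^{i(n−1)} (a_{i+1},…,a_n, a₁, a₂,…,a_i) and β : B → A ⊗ B by β(a₁,…,a_n) = (−1)^{n−1} a_n ⊗ (a₁,…,a_{n−1}) − a₁ ⊗ (a₂,…,a_n). Then the compositions satisfy ∂̄ ∘ β = 0 and β ∘ ∂̄ = 0, i.e. the 2-periodic sequence … → B →^β A⊗B →^{∂̄} B →^β … is a complex. -/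

import Mathlib

open scoped TensorProduct
open PiTensorProduct
private lemma fin_app_congr' {α : Type*} {m : ℕ} (a : Fin m → α) {x y : ℕ}
    (hx : x < m) (hy : y < m) (h : x = y) : a ⟨x, hx⟩ = a ⟨y, hy⟩ := by
  subst h; rfl

private lemma neg_one_pow_period' (n : ℕ) : ((-1 : ℂ)) ^ ((n + 1) * n) = 1 := by
  rw [mul_comm]
  exact (Nat.even_mul_succ_self n).neg_one_pow

private lemma sign_combine' (n i : ℕ) :
    ((-1 : ℂ)) ^ n * (-1) ^ ((i + 1) * n) = (-1) ^ (i * n) := by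
  have h2 : ((-1 : ℂ)) ^ (2 * n) = 1 := by
    rw [pow_mul]; norm_num
  rw [← pow_add, show n + (i + 1) * n = i * n + 2 * n by ring, pow_add, h2, mul_one]

private lemma telescope' {M : Type*} [AddCommGroup M] (n : ℕ) (f : ℕ → M)
    (hf : f (n + 1) = f 0) :
    ∑ i ∈ Finset.range (n + 1), f (i + 1) = ∑ i ∈ Finset.range (n + 1), f i := by
  have h1 := Finset.sum_range_succ' f (n + 1)
  have h2 := Finset.sum_range_succ f (n + 1)
  rw [h2, hf] at h1
  exact add_right_cancel h1.symm

private lemma cons_last' {n : ℕ} {α : Type*} (a : Fin (n + 1) → α) (m : ℕ) (h : m < n + 1) :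
    (Fin.cons (a (Fin.last n)) (fun j : Fin n => a j.castSucc) : Fin (n + 1) → α) ⟨m, h⟩
      = a ⟨(m + n) % (n + 1), Nat.mod_lt _ (Nat.succ_pos n)⟩ := by
  match m with
  | 0 =>
    show (Fin.cons (a (Fin.last n)) (fun j : Fin n => a j.castSucc) : Fin (n + 1) → α) 0 = _
    rw [Fin.cons_zero]
    exact fin_app_congr' a (by omega) _ (by rw [Nat.zero_add, Nat.mod_eq_of_lt (by omega)])
  | k + 1 =>
    have hk : k < n := by omega
    show (Fin.cons (a (Fin.last n)) (fun j : Fin n => a j.castSucc) : Fin (n + 1) → α)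
        (Fin.succ ⟨k, hk⟩) = _
    rw [Fin.cons_succ]
    exact fin_app_congr' a (by omega) _
      (by rw [show k + 1 + n = k + (n + 1) by ring, Nat.add_mod_right,
        Nat.mod_eq_of_lt (by omega)])

private lemma cons_zero' {n : ℕ} {α : Type*} (a : Fin (n + 1) → α) (m : ℕ) (h : m < n + 1) :
    (Fin.cons (a 0) (fun j : Fin n => a j.succ) : Fin (n + 1) → α) ⟨m, h⟩ = a ⟨m, h⟩ := by
  match m with
  | 0 =>
    show (Fin.cons (a 0) (fun j : Fin n => a j.succ) : Fin (n + 1) → α) 0 = _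
    rw [Fin.cons_zero]; rfl
  | k + 1 =>
    have hk : k < n := by omega
    show (Fin.cons (a 0) (fun j : Fin n => a j.succ) : Fin (n + 1) → α)
        (Fin.succ ⟨k, hk⟩) = _
    rw [Fin.cons_succ]; rfl

/-- Quillen's 2-periodic complex `… → B →^β A⊗B →^∂̄ B →^β …` is a complex:
for the (graded components of the) maps
`∂̄(a₁ ⊗ (a₂,…,a_n)) = ∑_{i=1}^{n} (-1)^{i(n-1)} (a_{i+1},…,a_n,a₁,…,a_i)` and
`β(a₁,…,a_n) = (-1)^{n-1} a_n ⊗ (a₁,…,a_{n-1}) - a₁ ⊗ (a₂,…,a_n)`, the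
compositions `∂̄ ∘ β` and `β ∘ ∂̄` vanish. -/
theorem quillen_periodic_complex
    (A : Type*) [Ring A] [Algebra ℂ A] (n : ℕ)
    (dbar : A ⊗[ℂ] (⨂[ℂ] _ : Fin n, A) →ₗ[ℂ] (⨂[ℂ] _ : Fin (n + 1), A))
    (beta : (⨂[ℂ] _ : Fin (n + 1), A) →ₗ[ℂ] A ⊗[ℂ] (⨂[ℂ] _ : Fin n, A))
    (hdbar : ∀ (a₁ : A) (b : Fin n → A),
      dbar (a₁ ⊗ₜ[ℂ] tprod ℂ b) =
        ∑ i ∈ Finset.range (n + 1),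
          ((-1 : ℂ) ^ ((i + 1) * n)) •
            tprod ℂ (fun j : Fin (n + 1) =>
              (Fin.cons a₁ b : Fin (n + 1) → A)
                ⟨((j : ℕ) + (i + 1)) % (n + 1), Nat.mod_lt _ (Nat.succ_pos n)⟩))
    (hbeta : ∀ a : Fin (n + 1) → A,
      beta (tprod ℂ a) =
        ((-1 : ℂ) ^ n) •
            (a (Fin.last n) ⊗ₜ[ℂ] tprod ℂ (fun j : Fin n => a j.castSucc))
          - a 0 ⊗ₜ[ℂ] tprod ℂ (fun j : Fin n => a j.succ)) :
    dbar ∘ₗ beta = 0 ∧ beta ∘ₗ dbar = 0 := by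
  constructor
  · ext a
    simp only [LinearMap.compMultilinearMap_apply, LinearMap.comp_apply,
      LinearMap.zero_apply, LinearMap.compMultilinearMap_apply]
    rw [hbeta, map_sub, map_smul, hdbar, hdbar]
    set F : ℕ → (⨂[ℂ] _ : Fin (n + 1), A) := fun k =>
      ((-1 : ℂ)) ^ (k * n) • tprod ℂ (fun j : Fin (n + 1) =>
        a ⟨((j : ℕ) + k) % (n + 1), Nat.mod_lt _ (Nat.succ_pos n)⟩) with hF
    have h1 : ((-1 : ℂ)) ^ n • ∑ i ∈ Finset.range (n + 1),
        ((-1 : ℂ)) ^ ((i + 1) * n) • tprod ℂ (fun j : Fin (n + 1) =>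
          (Fin.cons (a (Fin.last n)) (fun j : Fin n => a j.castSucc) : Fin (n + 1) → A)
            ⟨((j : ℕ) + (i + 1)) % (n + 1), Nat.mod_lt _ (Nat.succ_pos n)⟩)
        = ∑ i ∈ Finset.range (n + 1), F i := by
      rw [Finset.smul_sum]
      refine Finset.sum_congr rfl fun i _ => ?_
      rw [smul_smul, sign_combine', hF]
      refine congrArg (HSMul.hSMul _) (congrArg (fun f => PiTensorProduct.tprod ℂ f) (funext fun j => ?_))
      rw [cons_last']
      exact fin_app_congr' a _ _ (by
        rw [Nat.mod_add_mod, show (j : ℕ) + (i + 1) + n = (j : ℕ) + i + (n + 1) by ring,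
          Nat.add_mod_right])
    have h2 : ∑ i ∈ Finset.range (n + 1),
        ((-1 : ℂ)) ^ ((i + 1) * n) • tprod ℂ (fun j : Fin (n + 1) =>
          (Fin.cons (a 0) (fun j : Fin n => a j.succ) : Fin (n + 1) → A)
            ⟨((j : ℕ) + (i + 1)) % (n + 1), Nat.mod_lt _ (Nat.succ_pos n)⟩)
        = ∑ i ∈ Finset.range (n + 1), F (i + 1) := by
      refine Finset.sum_congr rfl fun i _ => ?_
      rw [hF]
      refine congrArg (HSMul.hSMul _) (congrArg (fun f => PiTensorProduct.tprod ℂ f) (funext fun j => ?_))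
      rw [cons_zero']
    have hper : F (n + 1) = F 0 := by
      rw [hF]
      simp only [Nat.zero_mul, pow_zero, one_smul, neg_one_pow_period']
      refine congrArg (fun f => PiTensorProduct.tprod ℂ f) (funext fun j => ?_)
      exact fin_app_congr' a _ _ (Nat.add_mod_right _ _)
    rw [h1, h2, telescope' n F hper, sub_self]
  · ext a₁ b
    simp only [TensorProduct.AlgebraTensorModule.curry_apply, TensorProduct.curry_apply,
      LinearMap.coe_restrictScalars, LinearMap.compMultilinearMap_apply,
      LinearMap.comp_apply, LinearMap.zero_apply]
    rw [hdbar, map_sum]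
    set c : Fin (n + 1) → A := Fin.cons a₁ b with hc
    set T : ℕ → A ⊗[ℂ] (⨂[ℂ] _ : Fin n, A) := fun k =>
      ((-1 : ℂ)) ^ (k * n) • (c ⟨k % (n + 1), Nat.mod_lt _ (Nat.succ_pos n)⟩ ⊗ₜ[ℂ]
        tprod ℂ (fun j : Fin n => c ⟨((j : ℕ) + 1 + k) % (n + 1),
          Nat.mod_lt _ (Nat.succ_pos n)⟩)) with hT
    have key : ∀ i ∈ Finset.range (n + 1),
        beta (((-1 : ℂ)) ^ ((i + 1) * n) • tprod ℂ (fun j : Fin (n + 1) =>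
          c ⟨((j : ℕ) + (i + 1)) % (n + 1), Nat.mod_lt _ (Nat.succ_pos n)⟩))
          = T i - T (i + 1) := by
      intro i _
      rw [map_smul, hbeta, smul_sub, smul_smul,
        mul_comm (((-1 : ℂ)) ^ ((i + 1) * n)), sign_combine', hT]
      simp only
      congr 1
      · refine congrArg (HSMul.hSMul _) (congrArg₂ (· ⊗ₜ[ℂ] ·) ?_
          (congrArg (fun f => PiTensorProduct.tprod ℂ f) (funext fun j => ?_)))
        · exact fin_app_congr' c _ _ (by
            rw [Fin.val_last, show n + (i + 1) = i + (n + 1) by ring, Nat.add_mod_right])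
        · exact fin_app_congr' c _ _ (by rw [Fin.coe_castSucc]; ring_nf)
      · refine congrArg (HSMul.hSMul _) (congrArg₂ (· ⊗ₜ[ℂ] ·) ?_
          (congrArg (fun f => PiTensorProduct.tprod ℂ f) (funext fun j => ?_)))
        · exact fin_app_congr' c _ _ (by rw [Fin.val_zero, Nat.zero_add])
        · exact fin_app_congr' c _ _ (by rw [Fin.val_succ])
    rw [Finset.sum_congr rfl key, Finset.sum_sub_distrib]
    have hper : T (n + 1) = T 0 := by
      rw [hT]
      simp only [Nat.zero_mul, pow_zero, one_smul, neg_one_pow_period']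
      refine congrArg₂ (· ⊗ₜ[ℂ] ·) ?_
        (congrArg (fun f => PiTensorProduct.tprod ℂ f) (funext fun j => ?_))
      · exact fin_app_congr' c _ _ (by rw [Nat.mod_self, Nat.zero_mod])
      · exact fin_app_congr' c _ _ (by
          rw [show (j : ℕ) + 1 + (n + 1) = ((j : ℕ) + 1) + (n + 1) by ring, Nat.add_mod_right])
    rw [telescope' n T hper, sub_self]
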